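/- Let D be the densely defined symmetric operator on the real (or complex) Hilbert space ℓ²(ℕ) whose domain is the subspace of finitely supported sequences and which acts by (D f)(n) = √(n+1)·f(n+1) + √n·f(n−1) (with the convention f(−1) = 0), i.e. the Jacobi matrix with zero diagonal and off-diagonal entries √1, √2, √3, …. Then D is essentially self-adjoint: D is symmetric, closable, and its closure is self-adjoint (equivalently, the adjoint of D coincides with the closure of D). -/

import Mathlib

open scoped ENNReal

noncomputable section

/-- The dense subspace of finitely supported sequences in `ℓ²(ℕ)`. -/
def finitelySupported : Submodule ℝ (lp (fun _ : ℕ => ℝ) 2) where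
  carrier := {f | (Function.support (⇑f)).Finite}
  add_mem' := fun {f g} hf hg => (hf.union hg).subset <| by
    rw [lp.coeFn_add]; exact Function.support_add _ _
  zero_mem' := by
    show (Function.support (⇑(0 : lp (fun _ : ℕ => ℝ) 2))).Finite
    rw [lp.coeFn_zero]
    exact Set.finite_empty.subset (by simp [Function.support_zero])
  smul_mem' := fun c f hf => hf.subset fun n hn => by
    simp only [Function.mem_support, lp.coeFn_smul, Pi.smul_apply, smul_eq_mul] at hn ⊢
    exact fun h => hn (by rw [h, mul_zero])

/-- The Jacobi matrix with zero diagonal and off-diagonal entries `√1, √2, √3, …`,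
acting on sequences: `(D f)(n) = √(n+1)·f(n+1) + √n·f(n−1)` (note that at `n = 0`
the coefficient `√0 = 0` implements the convention `f(−1) = 0`). -/
def jacobiSeq (f : ℕ → ℝ) : ℕ → ℝ := fun n =>
  Real.sqrt (n + 1) * f (n + 1) + Real.sqrt n * f (n - 1)

theorem jacobiSeq_support_finite {f : ℕ → ℝ} (hf : (Function.support f).Finite) :
    (Function.support (jacobiSeq f)).Finite := by
  have h1 : Set.Finite ((fun n : ℕ => n + 1) ⁻¹' Function.support f) :=
    hf.preimage (fun a _ b _ h => by omega)
  have h2 : Set.Finite ((fun n : ℕ => n - 1) ⁻¹' Function.support f) := by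
    refine ((hf.image (fun m => m + 1)).union (Set.finite_singleton 0)).subset ?_
    intro n hn
    rcases Nat.eq_zero_or_pos n with h | h
    · exact Or.inr (by simp [h])
    · exact Or.inl ⟨n - 1, hn, by show n - 1 + 1 = n; omega⟩
  refine (h1.union h2).subset fun n hn => ?_
  by_contra hmem
  simp only [Set.mem_union, Set.mem_preimage, Function.mem_support, not_or, not_not] at hmem
  apply hn
  simp only [jacobiSeq, hmem.1, hmem.2, mul_zero, add_zero]

theorem jacobiSeq_memℓp {f : ℕ → ℝ} (hf : (Function.support f).Finite) :
    Memℓp (jacobiSeq f) 2 :=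
  (memℓp_zero (jacobiSeq_support_finite hf)).of_exponent_ge (by norm_num)

/-- The Jacobi operator `D` on `ℓ²(ℕ)` as a densely defined (partial) linear operator,
with domain the finitely supported sequences. -/
def jacobiOp : lp (fun _ : ℕ => ℝ) 2 →ₗ.[ℝ] lp (fun _ : ℕ => ℝ) 2 where
  domain := finitelySupported
  toFun :=
    { toFun := fun f => ⟨jacobiSeq (⇑(f : lp (fun _ : ℕ => ℝ) 2)), jacobiSeq_memℓp f.2⟩
      map_add' := fun f g => by
        apply lp.ext
        funext n
        simp only [Submodule.coe_add, lp.coeFn_add, Pi.add_apply, jacobiSeq]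
        ring
      map_smul' := fun c f => by
        apply lp.ext
        funext n
        simp only [Submodule.coe_smul, lp.coeFn_smul, Pi.smul_apply, smul_eq_mul,
          RingHom.id_apply, jacobiSeq]
        ring }

namespace JacobiESA

open Filter

abbrev El := lp (fun _ : ℕ => ℝ) 2

/-! ### Elementary summability lemmas -/

lemma fin_summable {F : ℕ → ℝ} (h : (Function.support F).Finite) : Summable F :=
  summable_of_ne_finset_zero (s := h.toFinset) fun m hm => by
    by_contra hne; exact hm (h.mem_toFinset.2 hne)

lemma sq_summable (f : El) : Summable (fun n => f n ^ 2) := by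
  have h := (lp.memℓp f).summable (p := 2) (by norm_num)
  simpa [Real.rpow_natCast, sq_abs] using h

lemma summable_mul_abs {f g : ℕ → ℝ} (hf : Summable fun n => f n ^ 2)
    (hg : Summable fun n => g n ^ 2) : Summable (fun n => |f n| * |g n|) := by
  apply Summable.of_nonneg_of_le (fun n => by positivity)
    (fun n => ?_) (((hf.add hg).div_const 2))
  nlinarith [sq_nonneg (|f n| - |g n|), sq_abs (f n), sq_abs (g n)]

lemma summable_mul {f g : ℕ → ℝ} (hf : Summable fun n => f n ^ 2)
    (hg : Summable fun n => g n ^ 2) : Summable (fun n => f n * g n) := by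
  have := summable_mul_abs hf hg
  exact (this.congr fun n => (abs_mul _ _).symm).of_abs

lemma inner_eq (f g : El) : (inner ℝ f g : ℝ) = ∑' n, f n * g n := by
  rw [lp.inner_eq_tsum]
  exact tsum_congr fun n => by simp only [RCLike.inner_apply, conj_trivial, mul_comm]

/-! ### The summation-by-parts pairing identity for finitely supported `f` -/

lemma supp_shift_up {f h : ℕ → ℝ} (hf : (Function.support f).Finite) :
    (Function.support (fun m : ℕ => Real.sqrt ((m : ℝ) + 1) * f (m + 1) * h m)).Finite := by
  refine (hf.preimage (f := fun n : ℕ => n + 1) (fun a _ b _ hab => by simpa using hab)).subset ?_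
  intro m hm
  simp only [Function.mem_support] at hm
  simp only [Set.mem_preimage, Function.mem_support]
  intro h0
  exact hm (by rw [h0]; ring)

lemma supp_shift_down {f h : ℕ → ℝ} (hf : (Function.support f).Finite) :
    (Function.support (fun m : ℕ => Real.sqrt (m : ℝ) * f (m - 1) * h m)).Finite := by
  refine ((hf.image (fun n => n + 1)).union (Set.finite_singleton 0)).subset ?_
  intro m hm
  simp only [Function.mem_support] at hm
  rcases Nat.eq_zero_or_pos m with h0 | h0
  · exact Or.inr (by simp [h0])
  · refine Or.inl ⟨m - 1, ?_, by show m - 1 + 1 = m; omega⟩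
    simp only [Function.mem_support]
    intro hz
    exact hm (by rw [hz]; ring)

lemma supp_same {f : ℕ → ℝ} (g : ℕ → ℝ) (hf : (Function.support f).Finite) :
    (Function.support (fun m => g m * f m)).Finite :=
  hf.subset (fun m hm => by
    simp only [Function.mem_support] at hm ⊢
    intro hz; exact hm (by rw [hz]; ring))

lemma pairing (f h : ℕ → ℝ) (hf : (Function.support f).Finite) :
    ∑' m, jacobiSeq f m * h m = ∑' m, f m * jacobiSeq h m := by
  have e1 : ∀ m : ℕ, jacobiSeq f m * h m
      = (Real.sqrt ((m:ℝ)+1) * f (m+1) * h m) + (Real.sqrt (m:ℝ) * f (m-1) * h m) := by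
    intro m; simp only [jacobiSeq]; ring
  have e2 : ∀ m : ℕ, f m * jacobiSeq h m
      = (Real.sqrt ((m:ℝ)+1) * h (m+1) * f m) + (Real.sqrt (m:ℝ) * h (m-1) * f m) := by
    intro m; simp only [jacobiSeq]; ring
  have sA := fin_summable (supp_shift_up (h := h) hf)
  have sB := fin_summable (supp_shift_down (h := h) hf)
  have sA' : Summable (fun m : ℕ => Real.sqrt ((m:ℝ)+1) * h (m+1) * f m) :=
    (fin_summable (supp_same (fun m : ℕ => Real.sqrt ((m:ℝ)+1) * h (m+1)) hf)).congr
      fun m => by ring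
  have sB' : Summable (fun m : ℕ => Real.sqrt (m:ℝ) * h (m-1) * f m) :=
    (fin_summable (supp_same (fun m : ℕ => Real.sqrt (m:ℝ) * h (m-1)) hf)).congr
      fun m => by ring
  have hAB' : (∑' m : ℕ, Real.sqrt ((m:ℝ)+1) * f (m+1) * h m)
      = ∑' m : ℕ, Real.sqrt (m:ℝ) * h (m-1) * f m := by
    rw [Summable.tsum_eq_zero_add sB']
    simp only [Nat.cast_zero, Real.sqrt_zero, zero_mul, zero_add, Nat.add_sub_cancel]
    push_cast
    exact tsum_congr fun m => by ring
  have hBA' : (∑' m : ℕ, Real.sqrt (m:ℝ) * f (m-1) * h m)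
      = ∑' m : ℕ, Real.sqrt ((m:ℝ)+1) * h (m+1) * f m := by
    rw [Summable.tsum_eq_zero_add sB]
    simp only [Nat.cast_zero, Real.sqrt_zero, zero_mul, zero_add, Nat.add_sub_cancel]
    push_cast
    exact tsum_congr fun m => by ring
  calc ∑' m, jacobiSeq f m * h m
      = (∑' m : ℕ, Real.sqrt ((m:ℝ)+1) * f (m+1) * h m)
        + ∑' m : ℕ, Real.sqrt (m:ℝ) * f (m-1) * h m := by
        rw [← Summable.tsum_add sA sB]; exact tsum_congr e1
    _ = (∑' m : ℕ, Real.sqrt ((m:ℝ)+1) * h (m+1) * f m)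
        + ∑' m : ℕ, Real.sqrt (m:ℝ) * h (m-1) * f m := by
        rw [hAB', hBA']; ring
    _ = ∑' m, f m * jacobiSeq h m := by
        rw [← Summable.tsum_add sA' sB']; exact (tsum_congr e2).symm

/-! ### The Carleman / Wronskian argument -/

lemma not_summable_inv_sqrt {c : ℝ} (hc : 0 < c) :
    ¬ Summable (fun N : ℕ => c / Real.sqrt ((N : ℝ) + 1)) := by
  intro hs
  have h1 : Summable (fun N : ℕ => 1 / Real.sqrt ((N : ℝ) + 1)) := by
    have := hs.div_const c
    refine this.congr fun n => ?_
    field_simp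
  have h2 : Summable (fun N : ℕ => 1 / Real.sqrt (N : ℝ)) := by
    rw [← summable_nat_add_iff 1]
    refine h1.congr fun n => by push_cast; ring_nf
  have h3 : Summable (fun N : ℕ => 1 / (N : ℝ) ^ ((1:ℝ)/2)) := by
    refine h2.congr fun n => by rw [Real.sqrt_eq_rpow]
  rw [Real.summable_one_div_nat_rpow] at h3
  norm_num at h3

set_option maxHeartbeats 1000000 in
lemma key {g h : ℕ → ℝ} (hg : Summable fun n => g n ^ 2) (hh : Summable fun n => h n ^ 2)
    (hJg : Summable fun n => jacobiSeq g n ^ 2) (hJh : Summable fun n => jacobiSeq h n ^ 2) :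
    ∑' n, jacobiSeq g n * h n = ∑' n, g n * jacobiSeq h n := by
  set F : ℕ → ℝ := fun n => jacobiSeq g n * h n - g n * jacobiSeq h n with hF
  set W : ℕ → ℝ := fun N => Real.sqrt ((N : ℝ) + 1) * (g (N+1) * h N - g N * h (N+1)) with hWdef
  have s1 : Summable (fun n => jacobiSeq g n * h n) := summable_mul hJg hh
  have s2 : Summable (fun n => g n * jacobiSeq h n) := summable_mul hg hJh
  have sF : Summable F := s1.sub s2
  have hpart : ∀ N, ∑ n ∈ Finset.range (N + 1), F n = W N := by
    intro N
    induction N with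
    | zero =>
      simp only [Finset.sum_range_one, hF, hWdef, jacobiSeq]
      norm_num
    | succ N ih =>
      rw [Finset.sum_range_succ, ih]
      simp only [hF, hWdef, jacobiSeq]
      have e1 : N + 1 + 1 = N + 2 := rfl
      have e2 : N + 1 - 1 = N := rfl
      rw [e1, e2]
      push_cast
      ring
  set L : ℝ := ∑' n, F n with hL
  have hW : Filter.Tendsto W Filter.atTop (nhds L) := by
    have h0 := sF.hasSum.tendsto_sum_nat
    have h1 := h0.comp (Filter.tendsto_add_atTop_nat 1)
    refine Filter.Tendsto.congr (fun N => ?_) h1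
    exact hpart N
  have hL0 : L = 0 := by
    by_contra hne
    have hc : 0 < |L| := abs_pos.mpr hne
    have habs : Filter.Tendsto (fun N => |W N|) Filter.atTop (nhds |L|) := hW.abs
    obtain ⟨N0, hN0⟩ := Filter.eventually_atTop.mp
      (habs.eventually (eventually_gt_nhds (half_lt_self hc)))
    set a : ℕ → ℝ := fun N => |g (N+1)| * |h N| + |g N| * |h (N+1)| with ha
    have hga : Summable (fun n => g (n+1) ^ 2) := (summable_nat_add_iff 1).2 hg
    have hha : Summable (fun n => h (n+1) ^ 2) := (summable_nat_add_iff 1).2 hh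
    have hsa : Summable a := by
      refine Summable.add ?_ ?_
      · have := summable_mul_abs hga hh; exact this
      · have := summable_mul_abs hg hha; exact this
    have hbound : ∀ N ≥ N0, |L| / 2 / Real.sqrt ((N:ℝ)+1) ≤ a N := by
      intro N hN
      have hs : (0:ℝ) < Real.sqrt ((N:ℝ)+1) := Real.sqrt_pos.mpr (by positivity)
      have hWb : |W N| ≤ Real.sqrt ((N:ℝ)+1) * a N := by
        rw [hWdef]
        simp only [abs_mul]
        rw [abs_of_nonneg hs.le]
        gcongr
        refine (abs_sub _ _).trans ?_
        simp only [ha, abs_mul]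
        exact le_refl _
      have := (hN0 N hN).le
      rw [div_le_iff₀ hs] at *
      calc |L|/2 ≤ |W N| := this
        _ ≤ Real.sqrt ((N:ℝ)+1) * a N := hWb
        _ = a N * Real.sqrt ((N:ℝ)+1) := by ring
    have hsum : Summable (fun N : ℕ => |L| / 2 / Real.sqrt ((N:ℝ)+1)) := by
      rw [← summable_nat_add_iff N0]
      refine Summable.of_nonneg_of_le (fun n => by positivity) (fun n => ?_)
        ((summable_nat_add_iff N0).2 hsa)
      exact hbound (n + N0) (by omega)
    exact not_summable_inv_sqrt (by positivity : (0:ℝ) < |L|/2) hsum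
  have := (s1.hasSum.sub s2.hasSum).tsum_eq
  rw [← hL] at this
  rw [hL0] at this
  linarith [this]

/-! ### lp singles and density -/

lemma single_coe (n : ℕ) :
    ⇑(lp.single (E := fun _ : ℕ => ℝ) 2 n (1:ℝ)) = fun m => if m = n then (1:ℝ) else 0 := by
  funext m
  by_cases h : m = n
  · subst h; rw [lp.single_apply_self]; simp
  · rw [lp.single_apply_ne _ _ _ h]; simp [h]

lemma single_supp_finite (n : ℕ) :
    (Function.support (⇑(lp.single (E := fun _ : ℕ => ℝ) 2 n (1:ℝ)))).Finite := by
  rw [single_coe]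
  refine (Set.finite_singleton n).subset ?_
  intro m hm
  simp only [Function.mem_support] at hm
  by_contra h
  simp only [Set.mem_singleton_iff] at h
  exact hm (if_neg h)

def dsingle (n : ℕ) : jacobiOp.domain :=
  ⟨lp.single 2 n (1:ℝ), single_supp_finite n⟩

lemma tsum_single_mul (n : ℕ) (v : ℕ → ℝ) :
    ∑' m, (lp.single (E := fun _ : ℕ => ℝ) 2 n (1:ℝ)) m * v m = v n := by
  rw [single_coe]
  have : ∀ m, (if m = n then (1:ℝ) else 0) * v m = if m = n then v n else 0 := by
    intro m
    by_cases h : m = n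
    · subst h; simp
    · simp [h]
  rw [tsum_congr this]
  exact tsum_ite_eq n (fun _ => v n)

lemma dense_fs : Dense (jacobiOp.domain : Set (lp (fun _ : ℕ => ℝ) 2)) := by
  intro f
  have hs := lp.hasSum_single (E := fun _ : ℕ => ℝ) (p := 2) (by norm_num) f
  refine mem_closure_of_tendsto hs (Filter.Eventually.of_forall fun s => ?_)
  show (Function.support (⇑(∑ i ∈ s, lp.single 2 i (f i)))).Finite
  refine s.finite_toSet.subset ?_
  intro m hm
  simp only [Function.mem_support, lp.coeFn_sum, Finset.sum_apply] at hm
  by_contra h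
  apply hm
  apply Finset.sum_eq_zero
  intro i hi
  exact lp.single_apply_ne 2 i _ (fun hmi => h (hmi ▸ hi))

lemma jacobiOp_apply (f : jacobiOp.domain) : ⇑(jacobiOp f) = jacobiSeq ⇑(f : El) := rfl

lemma fs_supp (f : jacobiOp.domain) : (Function.support (⇑(f : El))).Finite := f.2

/-! ### Graph transport to `WithLp 2` -/

abbrev H2 := WithLp 2 (El × El)

def eP : H2 ≃L[ℝ] El × El := WithLp.prodContinuousLinearEquiv 2 ℝ El El

def Sgraph : Submodule ℝ H2 := jacobiOp.graph.comap (eP.toLinearEquiv  : H2 →ₗ[ℝ] El × El)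

lemma mem_Sgraph (v : H2) : v ∈ Sgraph ↔ eP v ∈ jacobiOp.graph := Iff.rfl

lemma mem_graph_closure_iff (x : El × El) :
    x ∈ jacobiOp.graph.topologicalClosure ↔ eP.symm x ∈ Sgraph.topologicalClosure := by
  have h1 : (Sgraph : Set H2) = ⇑eP ⁻¹' ↑jacobiOp.graph := rfl
  have h2 : (Sgraph.topologicalClosure : Set H2)
      = ⇑eP ⁻¹' closure (↑jacobiOp.graph) := by
    rw [Submodule.topologicalClosure_coe, h1]
    exact (eP.toHomeomorph.preimage_closure _).symm
  constructor
  · intro hx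
    rw [← SetLike.mem_coe, h2]
    simp only [Set.mem_preimage, eP.apply_symm_apply]
    rwa [← SetLike.mem_coe, Submodule.topologicalClosure_coe] at hx
  · intro hx
    rw [← SetLike.mem_coe, h2] at hx
    simp only [Set.mem_preimage, eP.apply_symm_apply] at hx
    rwa [← SetLike.mem_coe, Submodule.topologicalClosure_coe]

lemma eP_symm_fst (a b : El) : (eP.symm (a, b)).fst = a := rfl
lemma eP_symm_snd (a b : El) : (eP.symm (a, b)).snd = b := rfl

lemma inner_H2 (u v : H2) :
    (inner ℝ u v : ℝ) = inner ℝ u.fst v.fst + inner ℝ u.snd v.snd :=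
  WithLp.prod_inner_apply u v

/-- Elements of the orthogonal complement of the graph satisfy `J u₂ = -u₁`. -/
lemma perp_eq (u : H2) (hu : u ∈ Sgraphᗮ) (n : ℕ) :
    jacobiSeq (⇑u.snd) n = -(u.fst n) := by
  have h0 : ∀ f : jacobiOp.domain, (inner ℝ (f : El) u.fst : ℝ) + inner ℝ (jacobiOp f) u.snd = 0 := by
    intro f
    have hin : eP.symm ((f : El), jacobiOp f) ∈ Sgraph := by
      rw [mem_Sgraph, eP.apply_symm_apply]
      exact jacobiOp.mem_graph f
    have := (Submodule.mem_orthogonal _ _).1 hu _ hin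
    rwa [inner_H2, eP_symm_fst, eP_symm_snd] at this
  have h1 := h0 (dsingle n)
  rw [inner_eq, inner_eq] at h1
  have h2 : (∑' m, (dsingle n : El) m * u.fst m) = u.fst n := tsum_single_mul n _
  have h3 : (∑' m, (jacobiOp (dsingle n)) m * u.snd m) = jacobiSeq (⇑u.snd) n := by
    rw [jacobiOp_apply]
    rw [pairing _ _ (fs_supp (dsingle n))]
    exact tsum_single_mul n _
  rw [h2, h3] at h1
  linarith

/-- The key membership lemma: if `z = J y` pointwise with `y, z ∈ ℓ²`, then `(y, z)` belongs
to the closure of the graph of the Jacobi operator. -/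
lemma mem_closure_graph_of (y z : El) (hz : ∀ n, z n = jacobiSeq (⇑y) n) :
    (y, z) ∈ jacobiOp.graph.topologicalClosure := by
  rw [mem_graph_closure_iff, ← Submodule.orthogonal_orthogonal_eq_closure,
    Submodule.mem_orthogonal]
  intro u hu
  rw [inner_H2, eP_symm_fst, eP_symm_snd, inner_eq, inner_eq]
  have hJu : ∀ n, jacobiSeq (⇑u.snd) n = -(u.fst n) := perp_eq u hu
  have hsq_u2 : Summable (fun n => (u.snd : El) n ^ 2) := sq_summable u.snd
  have hsq_y : Summable (fun n => y n ^ 2) := sq_summable y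
  have hsq_Ju2 : Summable (fun n => jacobiSeq (⇑u.snd) n ^ 2) := by
    refine (sq_summable u.fst).congr fun n => ?_
    rw [hJu n]; ring
  have hsq_Jy : Summable (fun n => jacobiSeq (⇑y) n ^ 2) := by
    refine (sq_summable z).congr fun n => by rw [hz n]
  have hkey := key hsq_u2 hsq_y hsq_Ju2 hsq_Jy
  have e1 : (∑' n, u.fst n * y n) = -∑' n, jacobiSeq (⇑u.snd) n * y n := by
    rw [← tsum_neg]
    exact tsum_congr fun n => by rw [hJu n]; ring
  have e2 : (∑' n, u.snd n * z n) = ∑' n, (u.snd : El) n * jacobiSeq (⇑y) n :=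
    tsum_congr fun n => by rw [hz n]
  rw [e1, e2, ← hkey]
  ring

/-- Conversely, any element of the closure of the graph pairs correctly with the domain. -/
lemma closure_graph_pairs (x w : El) (hxw : (x, w) ∈ jacobiOp.graph.topologicalClosure)
    (f : jacobiOp.domain) : (inner ℝ w (f : El) : ℝ) = inner ℝ x (jacobiOp f) := by
  have hu : eP.symm (-(jacobiOp f : El), (f : El)) ∈ Sgraphᗮ := by
    rw [Submodule.mem_orthogonal]
    intro v hv
    rw [mem_Sgraph, LinearPMap.mem_graph_iff] at hv
    obtain ⟨g, hg1, hg2⟩ := hv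
    simp only [inner_H2, eP_symm_fst, eP_symm_snd]
    rw [← show (g : El) = v.fst from hg1, ← show (jacobiOp g : El) = v.snd from hg2,
      inner_eq, inner_eq]
    have hp := pairing _ (⇑(f : El)) (fs_supp g)
    have e1 : (∑' n, (g : El) n * (-(jacobiOp f) : El) n)
        = -∑' n, (g : El) n * jacobiSeq (⇑(f : El)) n := by
      rw [← tsum_neg]
      refine tsum_congr fun n => ?_
      rw [lp.coeFn_neg, Pi.neg_apply, jacobiOp_apply]
      ring
    rw [jacobiOp_apply, e1]
    linarith [hp]
  rw [mem_graph_closure_iff, ← Submodule.orthogonal_orthogonal_eq_closure] at hxw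
  have h0 := (Submodule.mem_orthogonal _ _).1 hxw _ hu
  simp only [inner_H2, eP_symm_fst, eP_symm_snd] at h0
  have c1 : (inner ℝ w (f : El) : ℝ) = inner ℝ (f : El) w := real_inner_comm _ _
  have c2 : (inner ℝ x (jacobiOp f : El) : ℝ) = inner ℝ (jacobiOp f : El) x := real_inner_comm _ _
  have e2 : (inner ℝ (-(jacobiOp f : El)) x : ℝ) = -(inner ℝ (jacobiOp f : El) x) := by
    rw [inner_neg_left]
  rw [e2] at h0
  linarith

lemma closure_graph_pointwise (x w : El) (hxw : (x, w) ∈ jacobiOp.graph.topologicalClosure)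
    (n : ℕ) : w n = jacobiSeq (⇑x) n := by
  have h1 := closure_graph_pairs x w hxw (dsingle n)
  rw [inner_eq, inner_eq] at h1
  have h2 : (∑' m, w m * (dsingle n : El) m) = w n := by
    rw [tsum_congr (fun m => mul_comm (w m) _)]
    exact tsum_single_mul n _
  have h3 : (∑' m, x m * (jacobiOp (dsingle n)) m) = jacobiSeq (⇑x) n := by
    rw [tsum_congr (fun m => mul_comm (x m) _), jacobiOp_apply,
      pairing _ _ (fs_supp (dsingle n))]
    exact tsum_single_mul n _
  rw [h2, h3] at h1
  exact h1

/-! ### Assembly -/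

lemma eval_single_left (w : El) (n : ℕ) :
    (∑' m, w m * (dsingle n : El) m : ℝ) = w n := by
  rw [tsum_congr (fun m => mul_comm (w m) _)]
  exact tsum_single_mul n _

lemma eval_single_right (x : El) (n : ℕ) :
    (∑' m, x m * (jacobiOp (dsingle n)) m : ℝ) = jacobiSeq (⇑x) n := by
  rw [tsum_congr (fun m => mul_comm (x m) _), jacobiOp_apply,
    pairing _ _ (fs_supp (dsingle n))]
  exact tsum_single_mul n _

lemma jacobi_isFormalAdjoint : jacobiOp.IsFormalAdjoint jacobiOp := by
  intro f g
  rw [inner_eq, inner_eq, jacobiOp_apply, jacobiOp_apply]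
  exact pairing _ _ (fs_supp f)

lemma jacobi_isClosable : jacobiOp.IsClosable := by
  refine ⟨jacobiOp.graph.topologicalClosure.toLinearPMap, ?_⟩
  refine (Submodule.toLinearPMap_graph_eq _ ?_).symm
  rintro ⟨x1, x2⟩ hx h1
  simp only at h1
  subst h1
  have := closure_graph_pointwise 0 x2 hx
  apply lp.ext
  funext n
  rw [this n]
  simp [jacobiSeq, lp.coeFn_zero]

lemma adjoint_graph_le :
    jacobiOp.adjoint.graph ≤ jacobiOp.graph.topologicalClosure := by
  rintro ⟨y, z⟩ hy
  rw [LinearPMap.mem_graph_iff] at hy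
  obtain ⟨u, hu1, hu2⟩ := hy
  have hfa := LinearPMap.adjoint_isFormalAdjoint (T := jacobiOp) dense_fs
  refine mem_closure_graph_of y z fun n => ?_
  have h1 := hfa u (dsingle n)
  rw [inner_eq, inner_eq] at h1
  simp only at hu1 hu2
  rw [hu2, hu1] at h1
  rw [eval_single_left z n, eval_single_right y n] at h1
  exact h1

lemma closure_le_adjoint :
    jacobiOp.graph.topologicalClosure ≤ jacobiOp.adjoint.graph := by
  rintro ⟨x, w⟩ hx
  have h1 := closure_graph_pairs x w hx
  have hdom : x ∈ jacobiOp.adjoint.domain :=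
    LinearPMap.mem_adjoint_domain_of_exists x ⟨w, fun f => h1 f⟩
  have happ : jacobiOp.adjoint ⟨x, hdom⟩ = w :=
    LinearPMap.adjoint_apply_eq dense_fs ⟨x, hdom⟩ (fun v => h1 v)
  rw [LinearPMap.mem_graph_iff]
  exact ⟨⟨x, hdom⟩, rfl, happ⟩

lemma adjoint_eq_closure : jacobiOp.adjoint = jacobiOp.closure := by
  apply LinearPMap.eq_of_eq_graph
  rw [← jacobi_isClosable.graph_closure_eq_closure_graph]
  exact le_antisymm (fun _ h => adjoint_graph_le h) (fun _ h => closure_le_adjoint h)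

lemma closure_dom_sub : jacobiOp.domain ≤ jacobiOp.closure.domain :=
  jacobiOp.le_closure.1

lemma dense_closure_dom : Dense (jacobiOp.closure.domain : Set El) :=
  Dense.mono (fun x hx => closure_dom_sub hx) dense_fs

lemma closure_pointwise (x : jacobiOp.closure.domain) (n : ℕ) :
    (jacobiOp.closure x) n = jacobiSeq (⇑(x : El)) n := by
  have hg : ((x : El), jacobiOp.closure x) ∈ jacobiOp.closure.graph :=
    jacobiOp.closure.mem_graph x
  rw [← jacobi_isClosable.graph_closure_eq_closure_graph] at hg
  exact closure_graph_pointwise _ _ hg n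

lemma closure_isFormalAdjoint : jacobiOp.closure.IsFormalAdjoint jacobiOp.closure := by
  intro x y
  rw [inner_eq, inner_eq]
  have hx := closure_pointwise x
  have hy := closure_pointwise y
  have sJx : Summable (fun n => jacobiSeq (⇑(x : El)) n ^ 2) :=
    (sq_summable (jacobiOp.closure x)).congr fun n => by rw [hx n]
  have sJy : Summable (fun n => jacobiSeq (⇑(y : El)) n ^ 2) :=
    (sq_summable (jacobiOp.closure y)).congr fun n => by rw [hy n]
  calc (∑' n, (jacobiOp.closure x) n * (y : El) n)
      = ∑' n, jacobiSeq (⇑(x : El)) n * (y : El) n :=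
        tsum_congr fun n => by rw [hx n]
    _ = ∑' n, (x : El) n * jacobiSeq (⇑(y : El)) n :=
        key (sq_summable _) (sq_summable _) sJx sJy
    _ = ∑' n, (x : El) n * (jacobiOp.closure y) n :=
        tsum_congr fun n => by rw [hy n]

lemma closure_selfAdjoint : IsSelfAdjoint jacobiOp.closure := by
  rw [LinearPMap.isSelfAdjoint_def]
  have h1 : jacobiOp.closure ≤ jacobiOp.closure.adjoint :=
    LinearPMap.IsFormalAdjoint.le_adjoint dense_closure_dom closure_isFormalAdjoint
  have h2 : jacobiOp.closure.adjoint ≤ jacobiOp.closure := by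
    have hfa : jacobiOp.IsFormalAdjoint jacobiOp.closure.adjoint := by
      intro x y
      have hx' : (x : El) ∈ jacobiOp.closure.domain := closure_dom_sub x.2
      have h := LinearPMap.adjoint_isFormalAdjoint (T := jacobiOp.closure)
        dense_closure_dom y ⟨(x : El), hx'⟩
      have hcx : jacobiOp x = jacobiOp.closure ⟨(x : El), hx'⟩ :=
        jacobiOp.le_closure.2 rfl
      rw [← hcx] at h
      have c1 : (inner ℝ (jacobiOp x : El) (y : El) : ℝ)
          = inner ℝ (y : El) (jacobiOp x : El) := real_inner_comm _ _
      have c2 : (inner ℝ (x : El) (jacobiOp.closure.adjoint y) : ℝ)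
          = inner ℝ (jacobiOp.closure.adjoint y) (x : El) := real_inner_comm _ _
      rw [c1, c2, ← h]
    have := LinearPMap.IsFormalAdjoint.le_adjoint dense_fs hfa
    rwa [adjoint_eq_closure] at this
  apply LinearPMap.eq_of_eq_graph
  exact le_antisymm (LinearPMap.le_graph_of_le h2) (LinearPMap.le_graph_of_le h1)

end JacobiESA

/-- The Jacobi operator with zero diagonal and off-diagonal entries `√1, √2, √3, …` on
`ℓ²(ℕ)`, defined on the finitely supported sequences, is essentially self-adjoint:
it is symmetric (it is a formal adjoint of itself), it is closable, its closure is
self-adjoint, and equivalently its adjoint coincides with its closure. -/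
theorem jacobiOp_essentiallySelfAdjoint :
    jacobiOp.IsFormalAdjoint jacobiOp ∧ jacobiOp.IsClosable ∧
      IsSelfAdjoint jacobiOp.closure ∧ jacobiOp.adjoint = jacobiOp.closure :=
  ⟨JacobiESA.jacobi_isFormalAdjoint, JacobiESA.jacobi_isClosable,
    JacobiESA.closure_selfAdjoint, JacobiESA.adjoint_eq_closure⟩

end
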